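/- For every ν ≥ 1 the following holds. Let Υ be a proper ν-hyperbolic geodesic space and suppose that for all p, q ∈ Υ with d(p,q) ≤ 100ν there exists a geodesic [p, q'] of length at least 200ν with d(q, [p,q']) ≤ ν. Then Υ is 5ν-visible: for every a, b ∈ Υ there is a geodesic ray based at a passing within 5ν of b. -/
import Mathlib


open Metric Set

variable {X : Type*} [MetricSpace X]

/-- `f` parametrizes a geodesic segment from `x` to `y` (by arc length on `[0, dist x y]`). -/
def IsGeodesicSegment (f : ℝ → X) (x y : X) : Prop :=
  f 0 = x ∧ f (dist x y) = y ∧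
    ∀ s ∈ Icc (0 : ℝ) (dist x y), ∀ t ∈ Icc (0 : ℝ) (dist x y), dist (f s) (f t) = |s - t|

/-- `r` is a unit-speed geodesic ray based at `r 0`. -/
def IsGeodesicRay (r : ℝ → X) : Prop :=
  ∀ ⦃s t : ℝ⦄, 0 ≤ s → 0 ≤ t → dist (r s) (r t) = |s - t|

/-- `X` is `δ`-hyperbolic in the thin-triangles sense. -/
def SlimTriangles (X : Type*) [MetricSpace X] (δ : ℝ) : Prop :=
  ∀ (x y z : X) (f g h : ℝ → X), IsGeodesicSegment f x y → IsGeodesicSegment g y z →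
    IsGeodesicSegment h x z → ∀ t ∈ Icc (0 : ℝ) (dist x z),
      ∃ s, (s ∈ Icc (0 : ℝ) (dist x y) ∧ dist (h t) (f s) ≤ δ) ∨
           (s ∈ Icc (0 : ℝ) (dist y z) ∧ dist (h t) (g s) ≤ δ)

def GeodesicSpace (X : Type*) [MetricSpace X] : Prop :=
  ∀ x y : X, ∃ f : ℝ → X, IsGeodesicSegment f x y

/-- `X` is `μ`-visible: for every `a, b` there is a geodesic ray based at `a` passing
within `μ` of `b`. -/
def Visible (X : Type*) [MetricSpace X] (μ : ℝ) : Prop :=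
  ∀ a b : X, ∃ r : ℝ → X, IsGeodesicRay r ∧ r 0 = a ∧ ∃ t : ℝ, 0 ≤ t ∧ dist b (r t) ≤ μ

namespace LocalVisAux

/-- Gromov product of `x` and `z` seen from `w`. -/
noncomputable def gp (w x z : X) : ℝ := (dist x w + dist z w - dist x z) / 2

lemma gp_nonneg (w x z : X) : 0 ≤ gp w x z := by
  have := dist_triangle x w z
  simp only [gp]
  rw [dist_comm w z] at this
  linarith

lemma gp_comm (w x z : X) : gp w x z = gp w z x := by
  simp only [gp, dist_comm]; ring

lemma gp_add (w x z : X) : gp w x z + gp x w z = dist x w := by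
  simp only [gp]
  rw [dist_comm w x, dist_comm z x, dist_comm w z]
  ring

lemma gp_lip (w x z z' : X) : gp w x z ≤ gp w x z' + dist z z' := by
  have h1 : dist z w ≤ dist z z' + dist z' w := dist_triangle z z' w
  have h2 : dist x z' ≤ dist x z + dist z z' := dist_triangle x z z'
  simp only [gp]; linarith

lemma gp_eq_zero {m p q : X} (h : dist p m + dist m q = dist p q) : gp m p q = 0 := by
  simp only [gp]
  rw [dist_comm q m]
  linarith

lemma gp_shorten {w m z : X} (x : X) (h : dist w m + dist m z = dist w z) :
    gp w x m ≤ gp w x z := by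
  have h2 : dist x z ≤ dist x m + dist m z := dist_triangle x m z
  simp only [gp]
  rw [dist_comm m w, dist_comm z w] at *
  linarith

lemma dist_seg_left {f : ℝ → X} {x y : X} (hf : IsGeodesicSegment f x y)
    {t : ℝ} (ht : t ∈ Icc (0:ℝ) (dist x y)) : dist x (f t) = t := by
  have h0 : (0:ℝ) ∈ Icc (0:ℝ) (dist x y) := ⟨le_refl _, dist_nonneg⟩
  have := hf.2.2 0 h0 t ht
  rw [hf.1] at this
  rw [this, zero_sub, abs_neg, abs_of_nonneg ht.1]

lemma dist_seg_right {f : ℝ → X} {x y : X} (hf : IsGeodesicSegment f x y)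
    {t : ℝ} (ht : t ∈ Icc (0:ℝ) (dist x y)) : dist y (f t) = dist x y - t := by
  have h0 : dist x y ∈ Icc (0:ℝ) (dist x y) := ⟨dist_nonneg, le_refl _⟩
  have := hf.2.2 (dist x y) h0 t ht
  rw [hf.2.1] at this
  rw [this, abs_of_nonneg (by linarith [ht.2])]

lemma seg_restrict {f : ℝ → X} {x y : X} (hf : IsGeodesicSegment f x y)
    {c : ℝ} (hc : c ∈ Icc (0:ℝ) (dist x y)) : IsGeodesicSegment f x (f c) := by
  have hxc : dist x (f c) = c := dist_seg_left hf hc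
  refine ⟨hf.1, by rw [hxc], ?_⟩
  intro s hs t ht
  rw [hxc] at hs ht
  exact hf.2.2 s ⟨hs.1, hs.2.trans hc.2⟩ t ⟨ht.1, ht.2.trans hc.2⟩

lemma gp_le_dist (w x z : X) : gp w x z ≤ dist z w := by
  have := dist_triangle x z w
  simp only [gp]; linarith

lemma seg_rev {f : ℝ → X} {x y : X} (hf : IsGeodesicSegment f x y) :
    IsGeodesicSegment (fun t => f (dist x y - t)) y x := by
  refine ⟨by simpa using hf.2.1, by simp [dist_comm y x, hf.1], ?_⟩
  intro s hs t ht
  rw [dist_comm y x] at hs ht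
  have h1 : dist x y - s ∈ Icc (0:ℝ) (dist x y) := ⟨by linarith [hs.2], by linarith [hs.1]⟩
  have h2 : dist x y - t ∈ Icc (0:ℝ) (dist x y) := ⟨by linarith [ht.2], by linarith [ht.1]⟩
  have := hf.2.2 _ h1 _ h2
  rw [this]
  rw [show dist x y - s - (dist x y - t) = -(s - t) by ring, abs_neg]

lemma gp_le_dist_seg {f : ℝ → X} {x z : X} (hf : IsGeodesicSegment f x z) (w : X)
    {t : ℝ} (ht : t ∈ Icc (0:ℝ) (dist x z)) : gp w x z ≤ dist w (f t) := by
  have h1 : dist x (f t) = t := dist_seg_left hf ht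
  have h2 : dist z (f t) = dist x z - t := dist_seg_right hf ht
  have h3 : dist x w ≤ dist x (f t) + dist (f t) w := dist_triangle _ _ _
  have h4 : dist z w ≤ dist z (f t) + dist (f t) w := dist_triangle _ _ _
  rw [dist_comm (f t) w] at h3 h4
  simp only [gp]; linarith

section Hyp

variable {ν : ℝ} (hν : 1 ≤ ν) (hgeo : GeodesicSpace X) (hhyp : SlimTriangles X ν)

include hν hgeo hhyp

lemma four_point (w x y z : X) : min (gp w x y) (gp w y z) ≤ gp w x z + 3 * ν := by
  obtain ⟨h, hh⟩ := hgeo x z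
  obtain ⟨f, hf⟩ := hgeo x w
  obtain ⟨g, hg⟩ := hgeo w z
  obtain ⟨f', hf'⟩ := hgeo x y
  obtain ⟨g', hg'⟩ := hgeo y z
  set t : ℝ := gp x w z with htdef
  have htmem : t ∈ Icc (0:ℝ) (dist x z) := by
    constructor
    · exact gp_nonneg _ _ _
    · calc gp x w z ≤ dist z x := gp_le_dist _ _ _
        _ = dist x z := dist_comm _ _
  -- upper bound : dist w (h t) ≤ gp w x z + 2ν
  have key : dist w (h t) ≤ gp w x z + 2 * ν := by
    obtain ⟨s, hs⟩ := hhyp x w z f g h hf hg hh t htmem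
    rcases hs with ⟨hsmem, hsd⟩ | ⟨hsmem, hsd⟩
    · have e1 : dist x (h t) = t := dist_seg_left hh htmem
      have e2 : dist x (f s) = s := dist_seg_left hf hsmem
      have e3 : dist w (f s) = dist x w - s := dist_seg_right hf hsmem
      have e4 : dist x (h t) ≤ dist x (f s) + dist (f s) (h t) := dist_triangle _ _ _
      have e5 : dist w (h t) ≤ dist w (f s) + dist (f s) (h t) := dist_triangle _ _ _
      rw [dist_comm (h t) (f s)] at hsd
      simp only [gp, htdef] at *
      linarith [dist_comm x w, dist_comm z w, dist_comm x z, dist_comm z x, dist_comm w x, dist_comm w z]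
    · have e1 : dist z (h t) = dist x z - t := dist_seg_right hh htmem
      have e2 : dist w (g s) = s := dist_seg_left hg hsmem
      have e3 : dist z (g s) = dist w z - s := dist_seg_right hg hsmem
      have e4 : dist z (h t) ≤ dist z (g s) + dist (g s) (h t) := dist_triangle _ _ _
      have e5 : dist w (h t) ≤ dist w (g s) + dist (g s) (h t) := dist_triangle _ _ _
      rw [dist_comm (h t) (g s)] at hsd
      simp only [gp, htdef] at *
      linarith [dist_comm x w, dist_comm z w, dist_comm x z, dist_comm z x, dist_comm w x, dist_comm w z]
  obtain ⟨s', hs'⟩ := hhyp x y z f' g' h hf' hg' hh t htmem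
  rcases hs' with ⟨hsmem, hsd⟩ | ⟨hsmem, hsd⟩
  · have e1 : gp w x y ≤ dist w (f' s') := gp_le_dist_seg hf' w hsmem
    have e2 : dist w (h t) ≥ dist w (f' s') - dist (h t) (f' s') := by
      have := dist_triangle w (h t) (f' s')
      linarith
    calc min (gp w x y) (gp w y z) ≤ gp w x y := min_le_left _ _
      _ ≤ dist w (h t) + ν := by linarith
      _ ≤ gp w x z + 3 * ν := by linarith
  · have e1 : gp w y z ≤ dist w (g' s') := gp_le_dist_seg hg' w hsmem
    have e2 : dist w (h t) ≥ dist w (g' s') - dist (h t) (g' s') := by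
      have := dist_triangle w (h t) (g' s')
      linarith
    calc min (gp w x y) (gp w y z) ≤ gp w y z := min_le_right _ _
      _ ≤ dist w (h t) + ν := by linarith
      _ ≤ gp w x z + 3 * ν := by linarith

end Hyp

section Chain

variable {ν : ℝ} (hν : 1 ≤ ν) (hgeo : GeodesicSpace X) (hhyp : SlimTriangles X ν)

include hν hgeo hhyp

lemma chainH (v : ℕ → X) (N : ℕ)
    (hj : ∀ i, i + 2 ≤ N → gp (v (i+1)) (v i) (v (i+2)) ≤ 4 * ν)
    (hl : ∀ i, i + 1 ≤ N → 15 * ν ≤ dist (v i) (v (i+1))) :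
    ∀ k, k + 1 ≤ N → gp (v k) (v 0) (v (k+1)) ≤ 7 * ν := by
  intro k
  induction k with
  | zero =>
    intro _
    have h0 : gp (v 0) (v 0) (v 1) = 0 := by
      simp [gp, dist_comm (v 1) (v 0)]
    rw [h0]; linarith
  | succ k ih =>
    intro hk2
    have h1 : gp (v k) (v 0) (v (k+1)) ≤ 7 * ν := ih (by omega)
    have h2 : 8 * ν ≤ gp (v (k+1)) (v k) (v 0) := by
      have hadd : gp (v (k+1)) (v k) (v 0) + gp (v k) (v (k+1)) (v 0) = dist (v k) (v (k+1)) :=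
        gp_add _ _ _
      have hcm : gp (v k) (v (k+1)) (v 0) = gp (v k) (v 0) (v (k+1)) := gp_comm _ _ _
      have := hl k (by omega)
      linarith
    have h4 := four_point hν hgeo hhyp (v (k+1)) (v k) (v 0) (v (k+2))
    have h5 := hj k hk2
    by_contra hB
    push_neg at hB
    have hmin : 7 * ν < min (gp (v (k+1)) (v k) (v 0)) (gp (v (k+1)) (v 0) (v (k+2))) :=
      lt_min (by linarith) hB
    linarith

lemma chain_dist_add (v : ℕ → X) (N : ℕ)
    (hj : ∀ i, i + 2 ≤ N → gp (v (i+1)) (v i) (v (i+2)) ≤ 4 * ν)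
    (hl : ∀ i, i + 1 ≤ N → 15 * ν ≤ dist (v i) (v (i+1)))
    {j n : ℕ} (hjn : j + 1 ≤ n) (hnN : n ≤ N) :
    dist (v j) (v (j+1)) + dist (v (j+1)) (v n) ≤ dist (v j) (v n) + 14 * ν := by
  set u : ℕ → X := fun i => v (n - i) with hu
  have hj' : ∀ i, i + 2 ≤ n - j → gp (u (i+1)) (u i) (u (i+2)) ≤ 4 * ν := by
    intro i hi
    have a1 : u (i+1) = v ((n - i - 2) + 1) := by simp only [hu]; congr 1 <;> omega
    have a2 : u i = v ((n - i - 2) + 2) := by simp only [hu]; congr 1 <;> omega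
    have a3 : u (i+2) = v (n - i - 2) := by simp only [hu]; congr 1 <;> omega
    rw [a1, a2, a3, gp_comm]
    exact hj (n - i - 2) (by omega)
  have hl' : ∀ i, i + 1 ≤ n - j → 15 * ν ≤ dist (u i) (u (i+1)) := by
    intro i hi
    have a1 : u i = v ((n - i - 1) + 1) := by simp only [hu]; congr 1 <;> omega
    have a2 : u (i+1) = v (n - i - 1) := by simp only [hu]; congr 1 <;> omega
    rw [a1, a2, dist_comm]
    exact hl (n - i - 1) (by omega)
  have hk := chainH hν hgeo hhyp u (n - j) hj' hl' (n - j - 1) (by omega)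
  have a1 : u (n - j - 1) = v (j+1) := by simp only [hu]; congr 1 <;> omega
  have a2 : u 0 = v n := by simp only [hu]; congr 1 <;> omega
  have a3 : u ((n - j - 1) + 1) = v j := by simp only [hu]; congr 1 <;> omega
  rw [a1, a2, a3] at hk
  -- hk : gp (v (j+1)) (v n) (v j) ≤ 7 * ν
  rw [gp_comm] at hk
  simp only [gp] at hk
  linarith [dist_comm (v j) (v (j+1)), dist_comm (v n) (v (j+1)), dist_comm (v j) (v n)]

lemma chain_growth (v : ℕ → X) (N : ℕ)
    (hj : ∀ i, i + 2 ≤ N → gp (v (i+1)) (v i) (v (i+2)) ≤ 4 * ν)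
    (hl : ∀ i, i + 1 ≤ N → 15 * ν ≤ dist (v i) (v (i+1))) :
    ∀ k, k ≤ N → ν * k ≤ dist (v 0) (v k) := by
  intro k
  induction k with
  | zero => intro _; simp
  | succ k ih =>
    intro hk1
    have h1 := ih (by omega)
    have h2 := chainH hν hgeo hhyp v N hj hl k hk1
    have h3 := hl k hk1
    simp only [gp] at h2
    push_cast
    have hc1 := dist_comm (v 0) (v k)
    have hc2 := dist_comm (v k) (v (k+1))
    have hc3 := dist_comm (v 0) (v (k+1))
    linarith

lemma near_side (v : ℕ → X) (N : ℕ)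
    (hj : ∀ i, i + 2 ≤ N → gp (v (i+1)) (v i) (v (i+2)) ≤ 4 * ν)
    (hl : ∀ i, i + 1 ≤ N → 15 * ν ≤ dist (v i) (v (i+1)))
    {j n : ℕ} (hjn : j + 1 ≤ n) (hnN : n ≤ N)
    {e : ℝ → X} (he : IsGeodesicSegment e (v j) (v (j+1)))
    {h : ℝ → X} (hh : IsGeodesicSegment h (v j) (v n))
    {u : ℝ} (hu0 : 0 ≤ u) (hu9 : u + 9 * ν ≤ dist (v j) (v (j+1))) :
    ∃ s ∈ Icc (0:ℝ) (dist (v j) (v n)), dist (e u) (h s) ≤ ν := by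
  obtain ⟨g, hg⟩ := hgeo (v n) (v (j+1))
  have humem : u ∈ Icc (0:ℝ) (dist (v j) (v (j+1))) := ⟨hu0, by linarith⟩
  obtain ⟨s, hs⟩ := hhyp (v j) (v n) (v (j+1)) h g e hh hg he u humem
  rcases hs with ⟨hsmem, hsd⟩ | ⟨hsmem, hsd⟩
  · exact ⟨s, hsmem, hsd⟩
  · exfalso
    have hca := chain_dist_add hν hgeo hhyp v N hj hl hjn hnN
    have e1 : dist (v n) (g s) = s := dist_seg_left hg hsmem
    have e2 : dist (v (j+1)) (g s) = dist (v n) (v (j+1)) - s := dist_seg_right hg hsmem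
    have e3 : dist (v (j+1)) (e u) = dist (v j) (v (j+1)) - u := dist_seg_right he humem
    have e4 : dist (v j) (e u) = u := dist_seg_left he humem
    have t1 : dist (v j) (v n) ≤ dist (v j) (e u) + dist (e u) (g s) + dist (g s) (v n) :=
      dist_triangle4 _ _ _ _
    have t2 : dist (v (j+1)) (e u) ≤ dist (v (j+1)) (g s) + dist (g s) (e u) := dist_triangle _ _ _
    have hc1 := dist_comm (g s) (v n)
    have hc2 := dist_comm (g s) (e u)
    have hc3 := dist_comm (v (j+1)) (v n)
    have hsd' : dist (e u) (g s) ≤ ν := hsd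
    linarith

end Chain

structure Tip (X : Type*) [MetricSpace X] (ν : ℝ) where
  p : X
  q : X
  g : ℝ → X
  seg : IsGeodesicSegment g p q
  big : 200 * ν ≤ dist p q

section Tips

variable {ν : ℝ} (hν : 1 ≤ ν) (hgeo : GeodesicSpace X) (hhyp : SlimTriangles X ν)
  (hlocal : ∀ p q : X, dist p q ≤ 100 * ν →
      ∃ (q' : X) (f : ℝ → X), IsGeodesicSegment f p q' ∧ 200 * ν ≤ dist p q' ∧
        ∃ t ∈ Icc (0 : ℝ) (dist p q'), dist q (f t) ≤ ν)

include hν hgeo hhyp hlocal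

lemma tip_step (T : Tip X ν) :
    ∃ (q₂ : X) (g₂ : ℝ → X),
      IsGeodesicSegment g₂ (T.g (dist T.p T.q - 50 * ν)) q₂ ∧
      200 * ν ≤ dist (T.g (dist T.p T.q - 50 * ν)) q₂ ∧
      gp (T.g (dist T.p T.q - 50 * ν)) T.p q₂ ≤ 4 * ν ∧
      dist (T.g (dist T.p T.q - 50 * ν)) T.q = 50 * ν := by
  have hbig := T.big
  have hν0 : 0 ≤ ν := by linarith
  set c : ℝ := dist T.p T.q - 50 * ν with hc
  have hrange : c ∈ Icc (0:ℝ) (dist T.p T.q) := ⟨by linarith, by linarith⟩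
  set p' := T.g c with hp'
  have hpp' : dist T.p p' = c := dist_seg_left T.seg hrange
  have hp'q : dist p' T.q = 50 * ν := by
    rw [dist_comm, dist_seg_right T.seg hrange]; ring
  obtain ⟨q₂, g₂, hseg₂, hbig₂, u, humem, hub⟩ := hlocal p' T.q (by linarith)
  refine ⟨q₂, g₂, hseg₂, hbig₂, ?_, hp'q⟩
  have z0 : gp p' T.p T.q = 0 := gp_eq_zero (by rw [hpp', hp'q]; ring)
  have l1 : gp p' T.p (g₂ u) ≤ ν := by
    have := gp_lip p' T.p (g₂ u) T.q
    rw [z0, dist_comm (g₂ u) T.q] at this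
    linarith
  have e_u : gp p' q₂ (g₂ u) = u := by
    have a1 : dist p' (g₂ u) = u := dist_seg_left hseg₂ humem
    have a2 : dist q₂ (g₂ u) = dist p' q₂ - u := dist_seg_right hseg₂ humem
    simp only [gp]
    rw [dist_comm q₂ p', dist_comm (g₂ u) p', a1, a2]
    ring
  have hu49 : 49 * ν ≤ u := by
    have := dist_triangle p' (g₂ u) T.q
    rw [dist_seg_left hseg₂ humem, hp'q, dist_comm (g₂ u) T.q] at this
    linarith
  have h4 := four_point hν hgeo hhyp p' T.p q₂ (g₂ u)
  by_contra hB
  push_neg at hB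
  have hmin : 4 * ν < min (gp p' T.p q₂) (gp p' q₂ (g₂ u)) :=
    lt_min hB (by rw [e_u]; linarith)
  linarith

noncomputable def nextTip (T : Tip X ν) : Tip X ν :=
  ⟨T.g (dist T.p T.q - 50 * ν),
   (tip_step hν hgeo hhyp hlocal T).choose,
   (tip_step hν hgeo hhyp hlocal T).choose_spec.choose,
   (tip_step hν hgeo hhyp hlocal T).choose_spec.choose_spec.1,
   (tip_step hν hgeo hhyp hlocal T).choose_spec.choose_spec.2.1⟩

lemma nextTip_p (T : Tip X ν) :
    (nextTip hν hgeo hhyp hlocal T).p = T.g (dist T.p T.q - 50 * ν) := rfl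

lemma nextTip_junction (T : Tip X ν) :
    gp ((nextTip hν hgeo hhyp hlocal T).p) T.p ((nextTip hν hgeo hhyp hlocal T).q) ≤ 4 * ν :=
  (tip_step hν hgeo hhyp hlocal T).choose_spec.choose_spec.2.2.1

lemma nextTip_distq (T : Tip X ν) :
    dist ((nextTip hν hgeo hhyp hlocal T).p) T.q = 50 * ν :=
  (tip_step hν hgeo hhyp hlocal T).choose_spec.choose_spec.2.2.2

end Tips

section Limit

open Filter Topology

lemma limit_ray {ν : ℝ} (hν : 1 ≤ ν) [ProperSpace X] (a b : X)
    (x : ℕ → X) (H : ℕ → ℝ → X) (hH : ∀ n, IsGeodesicSegment (H n) a (x n))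
    (hub : ∀ C : ℝ, ∃ N : ℕ, ∀ n ≥ N, C ≤ dist a (x n))
    (s : ℕ → ℝ) (hsmem : ∀ n, s n ∈ Icc (0:ℝ) (dist a (x n)))
    (hsb : ∀ n, dist b (H n (s n)) ≤ 3 * ν) :
    ∃ r : ℝ → X, IsGeodesicRay r ∧ r 0 = a ∧ ∃ t : ℝ, 0 ≤ t ∧ dist b (r t) ≤ 5 * ν := by
  set U : Ultrafilter ℕ := Ultrafilter.of atTop with hU
  have hUle : (U : Filter ℕ) ≤ atTop := Ultrafilter.of_le atTop
  have hev : ∀ C : ℝ, {n : ℕ | C ≤ dist a (x n)} ∈ U := by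
    intro C
    obtain ⟨N, hN⟩ := hub C
    exact hUle (mem_atTop_sets.2 ⟨N, hN⟩)
  have exLim : ∀ t : ℝ, 0 ≤ t → ∃ z : X, Tendsto (fun n => H n t) (U : Filter ℕ) (𝓝 z) := by
    intro t ht
    have hcpt : IsCompact (closedBall a t) := isCompact_closedBall a t
    have hmem : (U.map (fun n => H n t) : Filter X) ≤ 𝓟 (closedBall a t) := by
      rw [le_principal_iff, Ultrafilter.coe_map, Filter.mem_map]
      refine mem_of_superset (hev t) ?_
      intro n hn
      simp only [Set.mem_preimage, mem_closedBall]
      rw [dist_comm, dist_seg_left (hH n) ⟨ht, hn⟩]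
    obtain ⟨z, _, hz⟩ := hcpt.ultrafilter_le_nhds (U.map (fun n => H n t)) hmem
    exact ⟨z, hz⟩
  set r : ℝ → X := fun t => if ht : (0:ℝ) ≤ t then (exLim t ht).choose else a with hrdef
  have hr : ∀ t : ℝ, 0 ≤ t → Tendsto (fun n => H n t) (U : Filter ℕ) (𝓝 (r t)) := by
    intro t ht
    have he : r t = (exLim t ht).choose := dif_pos ht
    rw [he]
    exact (exLim t ht).choose_spec
  refine ⟨r, ?_, ?_, ?_⟩
  · intro s' t' hs' ht'
    have h1 : Tendsto (fun n => dist (H n s') (H n t')) (U : Filter ℕ)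
        (𝓝 (dist (r s') (r t'))) := (hr s' hs').dist (hr t' ht')
    have h2 : ∀ᶠ n in (U : Filter ℕ), dist (H n s') (H n t') = |s' - t'| := by
      filter_upwards [hev (max s' t')] with n hn
      exact (hH n).2.2 s' ⟨hs', le_trans (le_max_left _ _) hn⟩ t' ⟨ht', le_trans (le_max_right _ _) hn⟩
    exact tendsto_nhds_unique (h1.congr' h2) tendsto_const_nhds
  · have h1 := hr 0 le_rfl
    have h2 : (fun n => H n 0) = fun _ => a := funext fun n => (hH n).1
    rw [h2] at h1
    exact tendsto_nhds_unique h1 tendsto_const_nhds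
  · set R : ℝ := dist a b + 3 * ν with hR
    have hsR : ∀ n, s n ∈ Icc (0:ℝ) R := by
      intro n
      refine ⟨(hsmem n).1, ?_⟩
      have h1 : dist a (H n (s n)) = s n := dist_seg_left (hH n) (hsmem n)
      have h2 : dist a (H n (s n)) ≤ dist a b + dist b (H n (s n)) := dist_triangle _ _ _
      have := hsb n
      rw [h1] at h2
      linarith
    have hcpt : IsCompact (Icc (0:ℝ) R) := isCompact_Icc
    have hmem : (U.map s : Filter ℝ) ≤ 𝓟 (Icc (0:ℝ) R) := by
      rw [le_principal_iff, Ultrafilter.coe_map, Filter.mem_map]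
      exact Filter.univ_mem' hsR
    obtain ⟨t0, ht0mem, ht0⟩ := hcpt.ultrafilter_le_nhds (U.map s) hmem
    have hstend : Tendsto s (U : Filter ℕ) (𝓝 t0) := ht0
    refine ⟨t0, ht0mem.1, ?_⟩
    have A1 : Tendsto (fun n => dist b (H n t0)) (U : Filter ℕ) (𝓝 (dist b (r t0))) :=
      tendsto_const_nhds.dist (hr t0 ht0mem.1)
    have hd0 : Tendsto (fun n => dist (s n) t0) (U : Filter ℕ) (𝓝 0) := by
      have := hstend.dist (tendsto_const_nhds :
        Tendsto (fun _ : ℕ => t0) (U : Filter ℕ) (𝓝 t0))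
      rwa [dist_self] at this
    have A3 : Tendsto (fun n => 3 * ν + dist (s n) t0) (U : Filter ℕ) (𝓝 (3 * ν + 0)) :=
      tendsto_const_nhds.add hd0
    have A2 : ∀ᶠ n in (U : Filter ℕ), dist b (H n t0) ≤ 3 * ν + dist (s n) t0 := by
      filter_upwards [hev t0] with n hn
      have h1 : dist (H n (s n)) (H n t0) = |s n - t0| :=
        (hH n).2.2 (s n) (hsmem n) t0 ⟨ht0mem.1, hn⟩
      have h2 : dist b (H n t0) ≤ dist b (H n (s n)) + dist (H n (s n)) (H n t0) :=
        dist_triangle _ _ _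
      rw [h1] at h2
      have := hsb n
      rw [Real.dist_eq]
      linarith
    have hfin : dist b (r t0) ≤ 3 * ν + 0 := le_of_tendsto_of_tendsto A1 A3 A2
    linarith

end Limit

section Build

variable {ν : ℝ} (hν : 1 ≤ ν) (hgeo : GeodesicSpace X) (hhyp : SlimTriangles X ν)
  (hlocal : ∀ p q : X, dist p q ≤ 100 * ν →
      ∃ (q' : X) (f : ℝ → X), IsGeodesicSegment f p q' ∧ 200 * ν ≤ dist p q' ∧
        ∃ t ∈ Icc (0 : ℝ) (dist p q'), dist q (f t) ≤ ν)

include hν hgeo hhyp hlocal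

lemma tips_chain (T₀ : Tip X ν) :
    ∃ (w : ℕ → X) (E : ℕ → ℝ → X),
      w 0 = T₀.p ∧ E 0 = T₀.g ∧
      (∀ n, IsGeodesicSegment (E n) (w n) (w (n+1))) ∧
      (∀ n, 150 * ν ≤ dist (w n) (w (n+1))) ∧
      (∀ n, gp (w (n+1)) (w n) (w (n+2)) ≤ 4 * ν) ∧
      dist (w 0) (w 1) + dist (w 1) T₀.q = dist (w 0) T₀.q := by
  have hν0 : (0:ℝ) ≤ ν := by linarith
  set T : ℕ → Tip X ν := fun n => (nextTip hν hgeo hhyp hlocal)^[n] T₀ with hT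
  have hTsucc : ∀ n, T (n+1) = nextTip hν hgeo hhyp hlocal (T n) := by
    intro n
    simp only [hT, Function.iterate_succ_apply']
  have hrange : ∀ n, dist (T n).p (T n).q - 50 * ν ∈ Icc (0:ℝ) (dist (T n).p (T n).q) := by
    intro n
    have := (T n).big
    exact ⟨by linarith, by linarith⟩
  have hp : ∀ n, (T (n+1)).p = (T n).g (dist (T n).p (T n).q - 50 * ν) := by
    intro n; rw [hTsucc n]; rfl
  have hdq : ∀ n, dist ((T (n+1)).p) (T n).q = 50 * ν := by
    intro n; rw [hTsucc n]; exact nextTip_distq hν hgeo hhyp hlocal (T n)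
  have hlen : ∀ n, dist ((T n).p) ((T (n+1)).p) = dist (T n).p (T n).q - 50 * ν := by
    intro n; rw [hp n]; exact dist_seg_left (T n).seg (hrange n)
  have hseg' : ∀ n, IsGeodesicSegment ((T n).g) ((T n).p) ((T (n+1)).p) := by
    intro n; rw [hp n]; exact seg_restrict (T n).seg (hrange n)
  refine ⟨fun n => (T n).p, fun n => (T n).g, rfl, rfl, hseg', ?_, ?_, ?_⟩
  · intro n
    have := (T n).big
    rw [hlen n]; linarith
  · intro n
    have j1 := nextTip_junction hν hgeo hhyp hlocal (T n)
    rw [← hTsucc n] at j1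
    have hbet : dist ((T (n+1)).p) ((T (n+2)).p) + dist ((T (n+2)).p) ((T (n+1)).q)
        = dist ((T (n+1)).p) ((T (n+1)).q) := by
      have e1 := hlen (n+1)
      have e2 := hdq (n+1)
      linarith
    exact le_trans (gp_shorten _ hbet) j1
  · show dist ((T 0).p) ((T 1).p) + dist ((T 1).p) ((T 0).q) = dist ((T 0).p) ((T 0).q)
    have e1 : dist ((T 0).p) ((T 1).p) = dist (T 0).p (T 0).q - 50 * ν := hlen 0
    have e2 : dist ((T 1).p) ((T 0).q) = 50 * ν := hdq 0
    linarith

lemma main_chain (a b : X) :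
    ∃ (x : ℕ → X) (H : ℕ → ℝ → X) (s : ℕ → ℝ),
      (∀ n, IsGeodesicSegment (H n) a (x n)) ∧
      (∀ C : ℝ, ∃ N : ℕ, ∀ n ≥ N, C ≤ dist a (x n)) ∧
      (∀ n, s n ∈ Icc (0:ℝ) (dist a (x n))) ∧
      (∀ n, dist b (H n (s n)) ≤ 3 * ν) := by
  have hν0 : (0:ℝ) ≤ ν := by linarith
  by_cases hcase : dist a b ≤ 100 * ν
  · -- CASE A : b is close to a
    obtain ⟨q0, g0, hseg0, hbig0, u0, hu0mem, hu0b⟩ := hlocal a b hcase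
    obtain ⟨w, E, hw0, hE0, hEseg, hElen, hjunc, _⟩ :=
      tips_chain hν hgeo hhyp hlocal ⟨a, q0, g0, hseg0, hbig0⟩
    have hw0a : w 0 = a := hw0
    have hE0g : E 0 = g0 := hE0
    have hj : ∀ N : ℕ, ∀ i, i + 2 ≤ N → gp (w (i+1)) (w i) (w (i+2)) ≤ 4 * ν :=
      fun _ i _ => hjunc i
    have hl : ∀ N : ℕ, ∀ i, i + 1 ≤ N → 15 * ν ≤ dist (w i) (w (i+1)) :=
      fun _ i _ => by linarith [hElen i]
    have hu0a : dist a (g0 u0) = u0 := by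
      rw [show a = (⟨a, q0, g0, hseg0, hbig0⟩ : Tip X ν).p from rfl] at hseg0 ⊢
      exact dist_seg_left hseg0 hu0mem
    have hu101 : u0 ≤ 101 * ν := by
      have h2 := dist_triangle a b (g0 u0)
      rw [hu0a] at h2
      linarith
    have hwit : ∀ n : ℕ, ∃ s ∈ Icc (0:ℝ) (dist a (w (n+2))),
        dist b ((hgeo a (w (n+2))).choose s) ≤ 3 * ν := by
      intro n
      have hh : IsGeodesicSegment ((hgeo a (w (n+2))).choose) (w 0) (w (n+2)) := by
        rw [hw0a]; exact (hgeo a (w (n+2))).choose_spec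
      have he : IsGeodesicSegment (E 0) (w 0) (w (0+1)) := hEseg 0
      have hlen0 : 150 * ν ≤ dist (w 0) (w (0+1)) := hElen 0
      have hns := near_side hν hgeo hhyp w (n+2) (hj (n+2)) (hl (n+2))
        (by omega : 0 + 1 ≤ n + 2) (le_refl (n+2)) he hh hu0mem.1
        (by linarith : u0 + 9 * ν ≤ dist (w 0) (w (0+1)))
      obtain ⟨s, hsmem, hsd⟩ := hns
      rw [hw0a] at hsmem
      refine ⟨s, hsmem, ?_⟩
      rw [hE0g] at hsd
      calc dist b ((hgeo a (w (n+2))).choose s)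
          ≤ dist b (g0 u0) + dist (g0 u0) ((hgeo a (w (n+2))).choose s) := dist_triangle _ _ _
        _ ≤ 3 * ν := by linarith
    choose sfun hsmemf hsb using hwit
    refine ⟨fun n => w (n+2), fun n => (hgeo a (w (n+2))).choose, sfun,
      fun n => (hgeo a (w (n+2))).choose_spec, ?_, hsmemf, hsb⟩
    intro C
    refine ⟨⌈C⌉₊, fun n hn => ?_⟩
    have h1 : C ≤ (⌈C⌉₊ : ℝ) := Nat.le_ceil C
    have h2 : ((⌈C⌉₊ : ℕ) : ℝ) ≤ (n : ℝ) := Nat.cast_le.2 hn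
    have h3 := chain_growth hν hgeo hhyp w (n+2) (hj (n+2)) (hl (n+2)) (n+2) (le_refl _)
    rw [hw0a] at h3
    have h4 : ((n:ℝ)+2) ≤ ν * ((n:ℝ)+2) := by nlinarith
    push_cast at h3
    linarith
  · -- CASE B : b is far from a
    push_neg at hcase
    obtain ⟨c, hc⟩ := hgeo a b
    have hrangeL : dist a b - 50 * ν ∈ Icc (0:ℝ) (dist a b) := ⟨by linarith, by linarith⟩
    have hcres : IsGeodesicSegment c a (c (dist a b - 50 * ν)) := seg_restrict hc hrangeL
    set p : X := c (dist a b - 50 * ν) with hpdef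
    have hap : dist a p = dist a b - 50 * ν := dist_seg_left hc hrangeL
    have hpb : dist p b = 50 * ν := by
      rw [dist_comm, dist_seg_right hc hrangeL]; ring
    obtain ⟨q0, g0, hseg0, hbig0, u0, hu0mem, hu0b⟩ := hlocal p b (by linarith)
    obtain ⟨w, E, hw0, hE0, hEseg, hElen, hjunc, hbet0⟩ :=
      tips_chain hν hgeo hhyp hlocal ⟨p, q0, g0, hseg0, hbig0⟩
    have hw0p : w 0 = p := hw0
    have hE0g : E 0 = g0 := hE0
    obtain ⟨v, hv0, hvs⟩ : ∃ v : ℕ → X, v 0 = a ∧ ∀ m, v (m+1) = w m :=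
      ⟨fun n => Nat.casesOn n a (fun m => w m), rfl, fun m => rfl⟩
    have hu0p : dist p (g0 u0) = u0 := dist_seg_left hseg0 hu0mem
    have hu49 : 49 * ν ≤ u0 := by
      have h := dist_triangle p (g0 u0) b
      rw [hu0p, hpb, dist_comm (g0 u0) b] at h
      linarith
    have hu51 : u0 ≤ 51 * ν := by
      have h := dist_triangle p b (g0 u0)
      have h2 := dist_triangle p (g0 u0) b
      rw [hu0p] at h2
      rw [hpb, dist_comm b (g0 u0)] at h
      have h3 := dist_triangle p b (g0 u0)
      rw [hpb] at h3
      have : dist p (g0 u0) ≤ 50 * ν + dist b (g0 u0) := h3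
      rw [hu0p] at this
      linarith
    have j0 : gp p a q0 ≤ 4 * ν := by
      have z0 : gp p a b = 0 := gp_eq_zero (by rw [hap, hpb]; ring)
      have l1 : gp p a (g0 u0) ≤ ν := by
        have h := gp_lip p a (g0 u0) b
        rw [z0, dist_comm (g0 u0) b] at h
        linarith
      have e_u : gp p q0 (g0 u0) = u0 := by
        have a2 : dist q0 (g0 u0) = dist p q0 - u0 := dist_seg_right hseg0 hu0mem
        simp only [gp]
        rw [dist_comm q0 p, dist_comm (g0 u0) p, hu0p, a2]
        ring
      have h4 := four_point hν hgeo hhyp p a q0 (g0 u0)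
      by_contra hB
      push_neg at hB
      have hmin : 4 * ν < min (gp p a q0) (gp p q0 (g0 u0)) :=
        lt_min hB (by rw [e_u]; linarith)
      linarith
    have hj : ∀ N : ℕ, ∀ i, i + 2 ≤ N → gp (v (i+1)) (v i) (v (i+2)) ≤ 4 * ν := by
      intro N i _
      cases i with
      | zero =>
        have e1 : v (0+1) = w 0 := hvs 0
        have e2 : v (0+2) = w 1 := hvs 1
        rw [e1, e2, hv0, hw0p]
        have hsh : gp (w 0) a (w 1) ≤ gp (w 0) a q0 := gp_shorten _ hbet0
        rw [hw0p] at hsh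
        exact le_trans hsh j0
      | succ m =>
        have e1 : v (m+1+1) = w (m+1) := hvs (m+1)
        have e2 : v (m+1) = w m := hvs m
        have e3 : v (m+1+2) = w (m+2) := hvs (m+2)
        rw [e1, e3, e2]
        exact hjunc m
    have hl : ∀ N : ℕ, ∀ i, i + 1 ≤ N → 15 * ν ≤ dist (v i) (v (i+1)) := by
      intro N i _
      cases i with
      | zero =>
        have e1 : v (0+1) = w 0 := hvs 0
        rw [e1, hv0, hw0p, hap]
        linarith
      | succ m =>
        have e1 : v (m+1) = w m := hvs m
        have e2 : v (m+1+1) = w (m+1) := hvs (m+1)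
        rw [e1, e2]
        linarith [hElen m]
    have hwit : ∀ n : ℕ, ∃ s ∈ Icc (0:ℝ) (dist a (v (n+2))),
        dist b ((hgeo a (v (n+2))).choose s) ≤ 3 * ν := by
      intro n
      have hhnseg : IsGeodesicSegment ((hgeo a (v (n+2))).choose) a (v (n+2)) :=
        (hgeo a (v (n+2))).choose_spec
      have hh1nseg : IsGeodesicSegment ((hgeo (v 1) (v (n+2))).choose) (v 1) (v (n+2)) :=
        (hgeo (v 1) (v (n+2))).choose_spec
      have hv1 : v 1 = w 0 := hvs 0
      have hv2 : v (1+1) = w 1 := hvs 1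
      have he : IsGeodesicSegment (E 0) (v 1) (v (1+1)) := by
        rw [hv1, hv2]; exact hEseg 0
      have hlen1 : 150 * ν ≤ dist (v 1) (v (1+1)) := by
        rw [hv1, hv2]; exact hElen 0
      have hns := near_side hν hgeo hhyp v (n+2) (hj (n+2)) (hl (n+2))
        (by omega : 1 + 1 ≤ n + 2) (le_refl (n+2)) he hh1nseg hu0mem.1
        (by linarith : u0 + 9 * ν ≤ dist (v 1) (v (1+1)))
      obtain ⟨s, hsmem, hsd⟩ := hns
      rw [hE0g] at hsd
      -- second slim triangle : (v 1, a, v (n+2))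
      have hrev : IsGeodesicSegment (fun t => c (dist a p - t)) (v 1) a := by
        rw [hv1, hw0p]
        exact seg_rev hcres
      obtain ⟨s', hs'⟩ := hhyp (v 1) a (v (n+2)) (fun t => c (dist a p - t))
        ((hgeo a (v (n+2))).choose) ((hgeo (v 1) (v (n+2))).choose)
        hrev hhnseg hh1nseg s hsmem
      rcases hs' with ⟨hs'mem, hs'd0⟩ | ⟨hs'mem, hs'd⟩
      · -- impossible : b would be 3ν-close to the initial part of [a,b]
        exfalso
        have hs'd : dist ((hgeo (v 1) (v (n+2))).choose s) (c (dist a p - s')) ≤ ν := hs'd0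
        rw [hv1, hw0p] at hs'mem
        have hτmem : dist a p - s' ∈ Icc (0:ℝ) (dist a b) := by
          constructor
          · linarith [hs'mem.2, dist_comm p a]
          · rw [hap]; linarith [hs'mem.1]
        have hbc : dist b (c (dist a p - s')) = dist a b - (dist a p - s') :=
          dist_seg_right hc hτmem
        have chain1 : dist b (c (dist a p - s')) ≤ 3 * ν := by
          calc dist b (c (dist a p - s'))
              ≤ dist b (g0 u0) + dist (g0 u0) ((hgeo (v 1) (v (n+2))).choose s)
                + dist ((hgeo (v 1) (v (n+2))).choose s) (c (dist a p - s')) :=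
                dist_triangle4 _ _ _ _
            _ ≤ 3 * ν := by linarith
        rw [hbc, hap] at chain1
        linarith [hs'mem.1]
      · refine ⟨s', hs'mem, ?_⟩
        calc dist b ((hgeo a (v (n+2))).choose s')
            ≤ dist b (g0 u0) + dist (g0 u0) ((hgeo (v 1) (v (n+2))).choose s)
              + dist ((hgeo (v 1) (v (n+2))).choose s) ((hgeo a (v (n+2))).choose s') :=
              dist_triangle4 _ _ _ _
          _ ≤ 3 * ν := by linarith
    choose sfun hsmemf hsb using hwit
    refine ⟨fun n => v (n+2), fun n => (hgeo a (v (n+2))).choose, sfun,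
      fun n => (hgeo a (v (n+2))).choose_spec, ?_, hsmemf, hsb⟩
    intro C
    refine ⟨⌈C⌉₊, fun n hn => ?_⟩
    have h1 : C ≤ (⌈C⌉₊ : ℝ) := Nat.le_ceil C
    have h2 : ((⌈C⌉₊ : ℕ) : ℝ) ≤ (n : ℝ) := Nat.cast_le.2 hn
    have h3 := chain_growth hν hgeo hhyp v (n+2) (hj (n+2)) (hl (n+2)) (n+2) (le_refl _)
    rw [hv0] at h3
    have h4 : ((n:ℝ)+2) ≤ ν * ((n:ℝ)+2) := by nlinarith
    push_cast at h3
    linarith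

end Build

end LocalVisAux

/-- **Proposition (GMS 6.3).** For every `ν ≥ 1`: if `Υ` is a proper `ν`-hyperbolic geodesic
space such that any two points at distance at most `100ν` lie, up to error `ν`, on a geodesic of
length at least `200ν` issuing from the first, then `Υ` is `5ν`-visible. -/
theorem local_visibility
    (ν : ℝ) (hν : 1 ≤ ν) [ProperSpace X]
    (hgeo : GeodesicSpace X) (hhyp : SlimTriangles X ν)
    (hlocal : ∀ p q : X, dist p q ≤ 100 * ν →
      ∃ (q' : X) (f : ℝ → X), IsGeodesicSegment f p q' ∧ 200 * ν ≤ dist p q' ∧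
        ∃ t ∈ Icc (0 : ℝ) (dist p q'), dist q (f t) ≤ ν) :
    Visible X (5 * ν) := by
  intro a b
  obtain ⟨x, H, s, hH, hub, hsmem, hsb⟩ := LocalVisAux.main_chain hν hgeo hhyp hlocal a b
  exact LocalVisAux.limit_ray hν a b x H hH hub s hsmem hsb
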